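/- arXiv:2007.06301 — 2 statements merged into one kernel-verified Lean document; each statement's English description precedes it below -/
import Mathlib

section
/- Let L > 0, R > 0, α > 0, and let H : [0,∞) → [0,1] be measurable and integrable with ‖H‖₁ = ∫_0^∞ H(x) dx. Define g(x) = ∫_0^L H(ρ_L(0,z)/R) H(ρ_L(x,z)/R) dz for x ∈ [0,L]. Then the integral of e^{g(x)} − 1 over the set Ψ_α = { x ∈ [0,L] : g(x) > α } satisfies ∫_{Ψ_α} (e^{g(x)} − 1) dx ≤ (4 R² ‖H‖₁² / α) (e^{2 R ‖H‖₁} − 1). -/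
open MeasureTheory Real

/-- Toroidal (circular) distance on `[0, L]`. -/
noncomputable def torDist (L x y : ℝ) : ℝ := min |x - y| (L - |x - y|)

lemma aux_intInt {f : ℝ → ℝ} (hf : Measurable f) (C : ℝ) (hb : ∀ x, ‖f x‖ ≤ C) (a b : ℝ) :
    IntervalIntegrable f volume a b := by
  rw [intervalIntegrable_iff]
  refine Measure.integrableOn_of_bounded ?_ hf.aestronglyMeasurable (ae_of_all _ hb)
  rw [Set.uIoc]
  exact measure_Ioc_lt_top.ne

/-- The integral of `e^{g(x)} − 1` over `Ψ_α = { x ∈ [0,L] : g(x) > α }` is at most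
`(4 R² ‖H‖₁² / α)(e^{2R‖H‖₁} − 1)`, where
`g(x) = ∫_0^L H(ρ_L(0,z)/R) H(ρ_L(x,z)/R) dz`. -/
theorem stmt_5 (L R α : ℝ) (hL : 0 < L) (hR : 0 < R) (hα : 0 < α) (H : ℝ → ℝ)
    (hmeas : Measurable H) (h0 : ∀ x, 0 ≤ H x) (h1 : ∀ x, H x ≤ 1)
    (hint : IntegrableOn H (Set.Ioi 0))
    (g : ℝ → ℝ)
    (hg : ∀ x, g x = ∫ z in (0:ℝ)..L, H (torDist L 0 z / R) * H (torDist L x z / R)) :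
    ∫ x in {x : ℝ | x ∈ Set.Icc (0:ℝ) L ∧ g x > α}, (Real.exp (g x) - 1)
      ≤ (4 * R ^ 2 * (∫ x in Set.Ioi (0:ℝ), H x) ^ 2 / α)
          * (Real.exp (2 * R * ∫ x in Set.Ioi (0:ℝ), H x) - 1) := by
  set M : ℝ := ∫ x in Set.Ioi (0:ℝ), H x with hMdef
  have hM0 : 0 ≤ M := setIntegral_nonneg measurableSet_Ioi fun x _ => h0 x
  have hnorm : ∀ y : ℝ, ‖H y‖ ≤ 1 := fun y => by
    rw [Real.norm_eq_abs, abs_of_nonneg (h0 y)]; exact h1 y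
  -- the symmetric profile function
  set φ : ℝ → ℝ := fun u => H (min u (L - u) / R) with hφdef
  have φmeas : Measurable φ :=
    hmeas.comp (((continuous_id.min (continuous_const.sub continuous_id)).div_const R).measurable)
  have φii : ∀ a b : ℝ, IntervalIntegrable φ volume a b :=
    aux_intInt φmeas 1 (fun x => hnorm _)
  -- joint measurability of the torus kernel
  have htorCont : Continuous fun p : ℝ × ℝ => torDist L p.1 p.2 := by
    unfold torDist
    have h : Continuous fun p : ℝ × ℝ => |p.1 - p.2| := (continuous_fst.sub continuous_snd).abs
    exact h.min (continuous_const.sub h)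
  have hkz : ∀ x : ℝ, Measurable fun z => H (torDist L x z / R) := fun x =>
    hmeas.comp (((htorCont.comp (continuous_const.prodMk continuous_id)).div_const R).measurable)
  have hkx : ∀ z : ℝ, Measurable fun x => H (torDist L x z / R) := fun z =>
    hmeas.comp (((htorCont.comp (continuous_id.prodMk continuous_const)).div_const R).measurable)
  -- integrability of bounded measurable functions on (0, L]
  have intOn : ∀ k : ℝ → ℝ, Measurable k → (∀ y, 0 ≤ k y) → (∀ y, k y ≤ 1) →
      IntegrableOn k (Set.Ioc (0:ℝ) L) volume := fun k mk k0 k1 =>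
    Measure.integrableOn_of_bounded measure_Ioc_lt_top.ne mk.aestronglyMeasurable
      (ae_of_all _ fun y => by rw [Real.norm_eq_abs, abs_of_nonneg (k0 y)]; exact k1 y)
  -- basic bound: ∫_0^c H(u/R) ≤ R·M
  have base : ∀ c : ℝ, (∫ u in (0:ℝ)..c, H (u / R)) ≤ R * M := by
    intro c
    rcases le_or_gt c 0 with hc | hc
    · rw [intervalIntegral.integral_of_ge hc]
      have h' : 0 ≤ ∫ x in Set.Ioc c 0, H (x / R) :=
        setIntegral_nonneg measurableSet_Ioc fun x _ => h0 _
      have h'' := mul_nonneg hR.le hM0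
      linarith
    · rw [intervalIntegral.integral_comp_div H hR.ne', zero_div, smul_eq_mul]
      have h1' : (∫ x in (0:ℝ)..c / R, H x) ≤ M := by
        rw [intervalIntegral.integral_of_le (by positivity)]
        exact setIntegral_mono_set hint (ae_of_all _ fun x => h0 x)
          Set.Ioc_subset_Ioi_self.eventuallyLE
      exact mul_le_mul_of_nonneg_left h1' hR.le
  -- ∫_0^L φ ≤ 2RM
  have hφL : (∫ u in (0:ℝ)..L, φ u) ≤ 2 * R * M := by
    have hle : ∀ u ∈ Set.Icc (0:ℝ) L, φ u ≤ H (u / R) + H ((L - u) / R) := by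
      intro u _
      rcases min_cases u (L - u) with ⟨h, _⟩ | ⟨h, _⟩
      · simp only [hφdef, h]
        have := h0 ((L - u) / R); linarith
      · simp only [hφdef, h]
        have := h0 (u / R); linarith
    have i1 : IntervalIntegrable (fun u => H (u / R)) volume 0 L :=
      aux_intInt (hmeas.comp (measurable_id.div_const R)) 1 (fun x => hnorm _) 0 L
    have i2 : IntervalIntegrable (fun u => H ((L - u) / R)) volume 0 L :=
      aux_intInt (hmeas.comp ((measurable_const.sub measurable_id).div_const R)) 1
        (fun x => hnorm _) 0 L
    have mono := intervalIntegral.integral_mono_on hL.le (φii 0 L) (i1.add i2) hle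
    have hsplit : (∫ u in (0:ℝ)..L, (H (u / R) + H ((L - u) / R)))
        = (∫ u in (0:ℝ)..L, H (u / R)) + ∫ u in (0:ℝ)..L, H ((L - u) / R) :=
      intervalIntegral.integral_add i1 i2
    have hrefl : (∫ u in (0:ℝ)..L, H ((L - u) / R)) = ∫ u in (0:ℝ)..L, H (u / R) := by
      rw [intervalIntegral.integral_comp_sub_left (fun v => H (v / R)) L, sub_self, sub_zero]
    have b1 := base L
    calc (∫ u in (0:ℝ)..L, φ u) ≤ _ := mono
      _ = (∫ u in (0:ℝ)..L, H (u / R)) + ∫ u in (0:ℝ)..L, H ((L - u) / R) := hsplit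
      _ ≤ R * M + R * M := by rw [hrefl]; linarith
      _ = 2 * R * M := by ring
  -- the inner integral bound, for z ∈ [0, L]
  have inner : ∀ z ∈ Set.Icc (0:ℝ) L, (∫ x in (0:ℝ)..L, H (torDist L x z / R)) ≤ 2 * R * M := by
    intro z hz
    have kii : ∀ a b : ℝ, IntervalIntegrable (fun x => H (torDist L x z / R)) volume a b :=
      aux_intInt (hkx z) 1 (fun x => hnorm _)
    have split : (∫ x in (0:ℝ)..L, H (torDist L x z / R))
        = (∫ x in (0:ℝ)..z, H (torDist L x z / R)) + ∫ x in z..L, H (torDist L x z / R) :=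
      (intervalIntegral.integral_add_adjacent_intervals (kii 0 z) (kii z L)).symm
    have e1 : (∫ x in (0:ℝ)..z, H (torDist L x z / R)) = ∫ u in (0:ℝ)..z, φ u := by
      have hEq : Set.EqOn (fun x => H (torDist L x z / R)) (fun x => φ (z - x))
          (Set.uIcc (0:ℝ) z) := by
        intro x hx
        rw [Set.uIcc_of_le hz.1] at hx
        simp only [hφdef, torDist]
        rw [abs_of_nonpos (by linarith [hx.2]), neg_sub]
      rw [intervalIntegral.integral_congr hEq,
        intervalIntegral.integral_comp_sub_left φ z, sub_self, sub_zero]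
    have e2 : (∫ x in z..L, H (torDist L x z / R)) = ∫ u in (0:ℝ)..(L - z), φ u := by
      have hEq : Set.EqOn (fun x => H (torDist L x z / R)) (fun x => φ (x - z))
          (Set.uIcc z L) := by
        intro x hx
        rw [Set.uIcc_of_le hz.2] at hx
        simp only [hφdef, torDist]
        rw [abs_of_nonneg (by linarith [hx.1])]
      rw [intervalIntegral.integral_congr hEq,
        intervalIntegral.integral_comp_sub_right φ z, sub_self]
    have e3 : (∫ u in (0:ℝ)..z, φ u) = ∫ u in (L - z)..L, φ u := by
      have hsym : ∀ v : ℝ, φ (L - v) = φ v := by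
        intro v
        simp only [hφdef, sub_sub_cancel]
        rw [min_comm]
      have h' : (∫ x in (0:ℝ)..z, φ (L - x)) = ∫ x in (L - z)..(L - 0), φ x :=
        intervalIntegral.integral_comp_sub_left φ L
      simp only [hsym, sub_zero] at h'
      exact h'
    have e4 : (∫ u in (0:ℝ)..(L - z), φ u) + ∫ u in (L - z)..L, φ u = ∫ u in (0:ℝ)..L, φ u :=
      intervalIntegral.integral_add_adjacent_intervals (φii 0 (L - z)) (φii (L - z) L)
    calc (∫ x in (0:ℝ)..L, H (torDist L x z / R))
        = (∫ u in (0:ℝ)..z, φ u) + ∫ u in (0:ℝ)..(L - z), φ u := by rw [split, e1, e2]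
      _ = (∫ u in (0:ℝ)..(L - z), φ u) + ∫ u in (L - z)..L, φ u := by rw [e3]; ring
      _ = ∫ u in (0:ℝ)..L, φ u := e4
      _ ≤ 2 * R * M := hφL
  -- the x = 0 profile
  have hC : (∫ z in (0:ℝ)..L, H (torDist L 0 z / R)) ≤ 2 * R * M := by
    have hEq : Set.EqOn (fun z => H (torDist L 0 z / R)) φ (Set.uIcc (0:ℝ) L) := by
      intro z hz
      rw [Set.uIcc_of_le hL.le] at hz
      simp only [hφdef, torDist, zero_sub, abs_neg]
      rw [abs_of_nonneg hz.1]
    rw [intervalIntegral.integral_congr hEq]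
    exact hφL
  -- pointwise bounds on g
  have g0 : ∀ x, 0 ≤ g x := by
    intro x
    rw [hg x]
    exact intervalIntegral.integral_nonneg hL.le fun u _ => mul_nonneg (h0 _) (h0 _)
  have gB : ∀ x, g x ≤ 2 * R * M := by
    intro x
    rw [hg x]
    have hprod : ∀ z ∈ Set.Icc (0:ℝ) L,
        H (torDist L 0 z / R) * H (torDist L x z / R) ≤ H (torDist L 0 z / R) := by
      intro z _
      have h' := mul_le_mul_of_nonneg_left (h1 (torDist L x z / R)) (h0 (torDist L 0 z / R))
      simpa using h'
    have ii1 : IntervalIntegrable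
        (fun z => H (torDist L 0 z / R) * H (torDist L x z / R)) volume 0 L := by
      refine aux_intInt ((hkz 0).mul (hkz x)) 1 (fun y => ?_) 0 L
      rw [Pi.mul_apply, Real.norm_eq_abs, abs_of_nonneg (mul_nonneg (h0 _) (h0 _))]
      exact mul_le_one₀ (h1 _) (h0 _) (h1 _)
    have ii2 : IntervalIntegrable (fun z => H (torDist L 0 z / R)) volume 0 L :=
      aux_intInt (hkz 0) 1 (fun y => hnorm _) 0 L
    calc (∫ z in (0:ℝ)..L, H (torDist L 0 z / R) * H (torDist L x z / R))
        ≤ ∫ z in (0:ℝ)..L, H (torDist L 0 z / R) :=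
          intervalIntegral.integral_mono_on hL.le ii1 ii2 hprod
      _ ≤ 2 * R * M := hC
  -- measurability of g
  have hFmeas : Measurable fun p : ℝ × ℝ =>
      H (torDist L 0 p.2 / R) * H (torDist L p.1 p.2 / R) := by
    have m1 : Measurable fun p : ℝ × ℝ => H (torDist L 0 p.2 / R) :=
      (hkz 0).comp measurable_snd
    have m2 : Measurable fun p : ℝ × ℝ => H (torDist L p.1 p.2 / R) :=
      hmeas.comp ((htorCont.div_const R).measurable)
    exact m1.mul m2
  have gEq : g = fun x => ∫ z in Set.Ioc (0:ℝ) L,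
      H (torDist L 0 z / R) * H (torDist L x z / R) := by
    funext x
    rw [hg x, intervalIntegral.integral_of_le hL.le]
  have gmeas : Measurable g := by
    rw [gEq]
    exact (hFmeas.stronglyMeasurable.integral_prod_right').measurable
  -- the set Ψ
  set Ψ : Set ℝ := {x : ℝ | x ∈ Set.Icc (0:ℝ) L ∧ g x > α} with hΨdef
  have hΨmeas : MeasurableSet Ψ :=
    measurableSet_Icc.inter (measurableSet_lt measurable_const gmeas)
  have hΨsub : Ψ ⊆ Set.Icc 0 L := fun x hx => hx.1
  have hΨfin : volume Ψ < ⊤ :=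
    lt_of_le_of_lt (measure_mono hΨsub) measure_Icc_lt_top
  -- Fubini : ∫_{(0,L]} g ≤ (2RM)²
  have hFint : Integrable (fun p : ℝ × ℝ => H (torDist L 0 p.2 / R) * H (torDist L p.1 p.2 / R))
      ((volume.restrict (Set.Ioc (0:ℝ) L)).prod (volume.restrict (Set.Ioc (0:ℝ) L))) := by
    refine Integrable.mono' (integrable_const 1) hFmeas.aestronglyMeasurable
      (ae_of_all _ fun p => ?_)
    rw [Real.norm_eq_abs, abs_of_nonneg (mul_nonneg (h0 _) (h0 _))]
    exact mul_le_one₀ (h1 _) (h0 _) (h1 _)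
  have swap : (∫ x in Set.Ioc (0:ℝ) L, ∫ z in Set.Ioc (0:ℝ) L,
        H (torDist L 0 z / R) * H (torDist L x z / R))
      = ∫ z in Set.Ioc (0:ℝ) L, ∫ x in Set.Ioc (0:ℝ) L,
        H (torDist L 0 z / R) * H (torDist L x z / R) :=
    integral_integral_swap hFint
  -- measurability in z of the inner integral
  have hinnerMeas : Measurable fun z => ∫ x in Set.Ioc (0:ℝ) L, H (torDist L x z / R) := by
    have hm : Measurable fun p : ℝ × ℝ => H (torDist L p.2 p.1 / R) :=
      hmeas.comp
        (((htorCont.comp (continuous_snd.prodMk continuous_fst)).div_const R).measurable)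
    exact (hm.stronglyMeasurable.integral_prod_right').measurable
  have hinner0 : ∀ z, 0 ≤ ∫ x in Set.Ioc (0:ℝ) L, H (torDist L x z / R) := fun z =>
    setIntegral_nonneg measurableSet_Ioc fun x _ => h0 _
  have hinnerL : ∀ z, (∫ x in Set.Ioc (0:ℝ) L, H (torDist L x z / R)) ≤ L := by
    intro z
    calc (∫ x in Set.Ioc (0:ℝ) L, H (torDist L x z / R))
        ≤ ∫ _x in Set.Ioc (0:ℝ) L, (1:ℝ) :=
          setIntegral_mono_on (intOn _ (hkx z) (fun y => h0 _) (fun y => h1 _))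
            (integrableOn_const measure_Ioc_lt_top.ne) measurableSet_Ioc
            fun x _ => h1 _
      _ = L := by
          rw [setIntegral_const, measureReal_def, Real.volume_Ioc, smul_eq_mul, mul_one, sub_zero,
            ENNReal.toReal_ofReal hL.le]
  have gIntBound : (∫ x in Set.Ioc (0:ℝ) L, g x) ≤ 2 * R * M * (2 * R * M) := by
    rw [gEq, swap]
    have step1 : (∫ z in Set.Ioc (0:ℝ) L, ∫ x in Set.Ioc (0:ℝ) L,
          H (torDist L 0 z / R) * H (torDist L x z / R))
        = ∫ z in Set.Ioc (0:ℝ) L,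
            H (torDist L 0 z / R) * ∫ x in Set.Ioc (0:ℝ) L, H (torDist L x z / R) := by
      refine setIntegral_congr_fun measurableSet_Ioc fun z _ => ?_
      exact integral_const_mul _ _
    rw [step1]
    have int1 : IntegrableOn (fun z => H (torDist L 0 z / R)
        * ∫ x in Set.Ioc (0:ℝ) L, H (torDist L x z / R)) (Set.Ioc (0:ℝ) L) volume := by
      refine Measure.integrableOn_of_bounded (M := L) measure_Ioc_lt_top.ne
        ((hkz 0).mul hinnerMeas).aestronglyMeasurable (ae_of_all _ fun z => ?_)
      rw [Real.norm_eq_abs, abs_of_nonneg (mul_nonneg (h0 _) (hinner0 z))]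
      calc H (torDist L 0 z / R) * ∫ x in Set.Ioc (0:ℝ) L, H (torDist L x z / R)
          ≤ ∫ x in Set.Ioc (0:ℝ) L, H (torDist L x z / R) :=
            mul_le_of_le_one_left (hinner0 z) (h1 _)
        _ ≤ L := hinnerL z
    have int2 : IntegrableOn (fun z => H (torDist L 0 z / R) * (2 * R * M))
        (Set.Ioc (0:ℝ) L) volume :=
      (intOn _ (hkz 0) (fun y => h0 _) (fun y => h1 _)).mul_const _
    have step2 : (∫ z in Set.Ioc (0:ℝ) L,
          H (torDist L 0 z / R) * ∫ x in Set.Ioc (0:ℝ) L, H (torDist L x z / R))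
        ≤ ∫ z in Set.Ioc (0:ℝ) L, H (torDist L 0 z / R) * (2 * R * M) := by
      refine setIntegral_mono_on int1 int2 measurableSet_Ioc fun z hz => ?_
      refine mul_le_mul_of_nonneg_left ?_ (h0 _)
      have h' := inner z ⟨hz.1.le, hz.2⟩
      rwa [intervalIntegral.integral_of_le hL.le] at h'
    have step3 : (∫ z in Set.Ioc (0:ℝ) L, H (torDist L 0 z / R) * (2 * R * M))
        = (∫ z in Set.Ioc (0:ℝ) L, H (torDist L 0 z / R)) * (2 * R * M) :=
      integral_mul_const _ _
    have step4 : (∫ z in Set.Ioc (0:ℝ) L, H (torDist L 0 z / R)) ≤ 2 * R * M := by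
      have h' := hC
      rwa [intervalIntegral.integral_of_le hL.le] at h'
    calc (∫ z in Set.Ioc (0:ℝ) L,
          H (torDist L 0 z / R) * ∫ x in Set.Ioc (0:ℝ) L, H (torDist L x z / R))
        ≤ ∫ z in Set.Ioc (0:ℝ) L, H (torDist L 0 z / R) * (2 * R * M) := step2
      _ = (∫ z in Set.Ioc (0:ℝ) L, H (torDist L 0 z / R)) * (2 * R * M) := step3
      _ ≤ 2 * R * M * (2 * R * M) :=
          mul_le_mul_of_nonneg_right step4 (by positivity)
  -- integrability of g on [0, L]
  have gIntOnIcc : IntegrableOn g (Set.Icc (0:ℝ) L) volume := by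
    refine Measure.integrableOn_of_bounded (M := 2 * R * M) measure_Icc_lt_top.ne
      gmeas.aestronglyMeasurable (ae_of_all _ fun x => ?_)
    rw [Real.norm_eq_abs, abs_of_nonneg (g0 x)]
    exact gB x
  have hIccIoc : (∫ x in Set.Icc (0:ℝ) L, g x) = ∫ x in Set.Ioc (0:ℝ) L, g x :=
    integral_Icc_eq_integral_Ioc
  -- Markov inequality
  have markov : α * (volume Ψ).toReal ≤ 2 * R * M * (2 * R * M) := by
    have m1 : (∫ _x in Ψ, α) ≤ ∫ x in Ψ, g x :=
      setIntegral_mono_on (integrableOn_const hΨfin.ne)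
        (gIntOnIcc.mono_set hΨsub) hΨmeas fun x hx => (hx.2).le
    rw [setIntegral_const, smul_eq_mul] at m1
    have m2 : (∫ x in Ψ, g x) ≤ ∫ x in Set.Icc (0:ℝ) L, g x :=
      setIntegral_mono_set gIntOnIcc (ae_of_all _ g0) hΨsub.eventuallyLE
    calc α * (volume Ψ).toReal = (volume Ψ).toReal * α := mul_comm _ _
      _ ≤ ∫ x in Ψ, g x := m1
      _ ≤ ∫ x in Set.Icc (0:ℝ) L, g x := m2
      _ = ∫ x in Set.Ioc (0:ℝ) L, g x := hIccIoc
      _ ≤ 2 * R * M * (2 * R * M) := gIntBound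
  have hμle : (volume Ψ).toReal ≤ 4 * R ^ 2 * M ^ 2 / α := by
    rw [le_div_iff₀ hα]
    nlinarith [markov]
  -- final estimate
  have hexp1 : (0:ℝ) ≤ Real.exp (2 * R * M) - 1 := by
    have h' : (1:ℝ) ≤ Real.exp (2 * R * M) := Real.one_le_exp (by positivity)
    linarith
  have intLHS : IntegrableOn (fun x => Real.exp (g x) - 1) Ψ volume := by
    refine Measure.integrableOn_of_bounded (M := Real.exp (2 * R * M)) hΨfin.ne
      ((Real.measurable_exp.comp gmeas).sub measurable_const).aestronglyMeasurable
      (ae_of_all _ fun x => ?_)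
    have e1 : (1:ℝ) ≤ Real.exp (g x) := Real.one_le_exp (g0 x)
    have e2 : Real.exp (g x) ≤ Real.exp (2 * R * M) := Real.exp_le_exp.2 (gB x)
    rw [Real.norm_eq_abs, abs_of_nonneg (by linarith)]
    linarith
  calc (∫ x in Ψ, (Real.exp (g x) - 1))
      ≤ ∫ _x in Ψ, (Real.exp (2 * R * M) - 1) := by
        refine setIntegral_mono_on intLHS (integrableOn_const hΨfin.ne) hΨmeas
          fun x _ => ?_
        have e2 : Real.exp (g x) ≤ Real.exp (2 * R * M) := Real.exp_le_exp.2 (gB x)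
        linarith
    _ = (volume Ψ).toReal * (Real.exp (2 * R * M) - 1) := by
        rw [setIntegral_const, smul_eq_mul, measureReal_def]
    _ ≤ (4 * R ^ 2 * M ^ 2 / α) * (Real.exp (2 * R * M) - 1) :=
        mul_le_mul_of_nonneg_right hμle hexp1
end

section
/- Let H : [0,∞) → [0,1] be measurable and integrable with ‖H‖₁ = ∫_0^∞ H(x) dx, and let γ > 0 satisfy 2γ‖H‖₁ < 1. For L > 1 set R_L = γ ln L and define g^L(x) = ∫_0^L H(ρ_L(0,z)/R_L) H(ρ_L(x,z)/R_L) dz for x ∈ [0,L]. Then (1/L) ∫_0^L ( e^{g^L(x)} − 1 ) dx → 0 as L → ∞. -/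
open MeasureTheory Real Filter

lemma exp_sub_one_le' (t : ℝ) : Real.exp t - 1 ≤ t * Real.exp t := by
  have h := Real.add_one_le_exp (-t)
  rw [Real.exp_neg] at h
  have hE := Real.exp_pos t
  nlinarith [mul_nonneg (sub_nonneg.2 h) hE.le, mul_inv_cancel₀ hE.ne']

lemma bddII {f : ℝ → ℝ} (hf : Measurable f) (C : ℝ)
    (hb : ∀ x, |f x| ≤ C) (a b : ℝ) : IntervalIntegrable f volume a b := by
  refine (intervalIntegrable_const (c := C)).mono_fun
    hf.aestronglyMeasurable.restrict (Eventually.of_forall fun x => ?_)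
  simp only [Real.norm_eq_abs]
  exact (hb x).trans (le_abs_self C)

lemma torDist_meas (L R a : ℝ) : Measurable fun z => torDist L a z / R := by
  unfold torDist; fun_prop

lemma torDist_comm (L x y : ℝ) : torDist L x y = torDist L y x := by
  unfold torDist; rw [abs_sub_comm]

lemma torInt_bound (H : ℝ → ℝ) (hmeas : Measurable H) (h0 : ∀ x, 0 ≤ H x) (h1 : ∀ x, H x ≤ 1)
    (hint : IntegrableOn H (Set.Ioi 0)) (L R a : ℝ) (hL : 0 < L) (hR : 0 < R)
    (ha0 : 0 ≤ a) (haL : a ≤ L) :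
    ∫ z in (0:ℝ)..L, H (torDist L a z / R) ≤ 2 * R * ∫ x in Set.Ioi (0:ℝ), H x := by
  set φ : ℝ → ℝ := fun t => H (min t (L - t) / R) with hφ
  have hφm : Measurable φ := by apply hmeas.comp; fun_prop
  have habs : ∀ g : ℝ → ℝ, (∀ x, |H (g x)| ≤ 1) := fun g x => by
    rw [abs_of_nonneg (h0 _)]; exact h1 _
  have hφI : ∀ x y : ℝ, IntervalIntegrable φ volume x y := fun x y =>
    bddII hφm 1 (habs _) x y
  have hsym : ∀ x, φ (L - x) = φ x := by
    intro x; simp only [hφ, sub_sub_cancel]; rw [min_comm]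
  -- split at a and substitute
  have h1' : ∫ z in (0:ℝ)..a, H (torDist L a z / R) = ∫ t in (0:ℝ)..a, φ t := by
    have he : ∀ z ∈ Set.uIcc (0:ℝ) a, H (torDist L a z / R) = φ (a - z) := by
      intro z hz
      rw [Set.uIcc_of_le ha0] at hz
      have habs' : |a - z| = a - z := abs_of_nonneg (by linarith [hz.2])
      simp only [torDist, hφ, habs']
    rw [intervalIntegral.integral_congr he, intervalIntegral.integral_comp_sub_left φ a]
    norm_num
  have h2' : ∫ z in a..L, H (torDist L a z / R) = ∫ t in (0:ℝ)..(L - a), φ t := by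
    have he : ∀ z ∈ Set.uIcc a L, H (torDist L a z / R) = φ (z - a) := by
      intro z hz
      rw [Set.uIcc_of_le haL] at hz
      have habs' : |a - z| = z - a := by rw [abs_sub_comm]; exact abs_of_nonneg (by linarith [hz.1])
      simp only [torDist, hφ, habs']
    rw [intervalIntegral.integral_congr he, intervalIntegral.integral_comp_sub_right φ a]
    norm_num
  have h3' : ∫ t in (0:ℝ)..a, φ t = ∫ t in (L - a)..L, φ t := by
    have : ∫ t in (L - a)..L, φ t = ∫ t in (L - a)..L, φ (L - t) :=
      intervalIntegral.integral_congr fun x _ => (hsym x).symm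
    rw [this, intervalIntegral.integral_comp_sub_left φ L]
    norm_num
  have hItor : ∀ x y : ℝ, IntervalIntegrable (fun z => H (torDist L a z / R)) volume x y :=
    fun x y => bddII (hmeas.comp (torDist_meas L R a)) 1 (habs _) x y
  have hsplit : ∫ z in (0:ℝ)..L, H (torDist L a z / R) = ∫ t in (0:ℝ)..L, φ t := by
    rw [← intervalIntegral.integral_add_adjacent_intervals (hItor 0 a) (hItor a L),
      h1', h2', h3', add_comm,
      intervalIntegral.integral_add_adjacent_intervals (hφI 0 (L - a)) (hφI (L - a) L)]
  -- evaluate ∫ φ over 0..L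
  have h4' : ∫ t in (0:ℝ)..L, φ t = 2 * ∫ t in (0:ℝ)..(L / 2), H (t / R) := by
    rw [← intervalIntegral.integral_add_adjacent_intervals (hφI 0 (L/2)) (hφI (L/2) L)]
    have e1 : ∫ t in (0:ℝ)..(L/2), φ t = ∫ t in (0:ℝ)..(L/2), H (t / R) := by
      refine intervalIntegral.integral_congr fun t ht => ?_
      rw [Set.uIcc_of_le (by linarith : (0:ℝ) ≤ L/2)] at ht
      simp only [hφ]
      rw [min_eq_left (by linarith [ht.2])]
    have e2 : ∫ t in (L/2)..L, φ t = ∫ t in (0:ℝ)..(L/2), H (t / R) := by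
      have : ∫ t in (L/2)..L, φ t = ∫ t in (L/2)..L,
          (fun s => H (s / R)) (L - t) := by
        refine intervalIntegral.integral_congr fun t ht => ?_
        rw [Set.uIcc_of_le (by linarith : L/2 ≤ L)] at ht
        simp only [hφ]
        rw [min_eq_right (by linarith [ht.1])]
      rw [this, intervalIntegral.integral_comp_sub_left (fun s => H (s / R)) L]
      norm_num [sub_half]
    rw [e1, e2]; ring
  rw [hsplit, h4']
  have h5' : ∫ t in (0:ℝ)..(L / 2), H (t / R) = R * ∫ t in (0:ℝ)..(L / 2 / R), H t := by
    rw [intervalIntegral.integral_comp_div (c := R) H hR.ne']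
    norm_num [smul_eq_mul]
  rw [h5']
  have h6' : ∫ t in (0:ℝ)..(L / 2 / R), H t ≤ ∫ x in Set.Ioi (0:ℝ), H x := by
    rw [intervalIntegral.integral_of_le (by positivity : (0:ℝ) ≤ L / 2 / R)]
    exact setIntegral_mono_set hint (Eventually.of_forall fun x => h0 x)
      (HasSubset.Subset.eventuallyLE Set.Ioc_subset_Ioi_self)
  nlinarith [h6', hR]

lemma perL (H : ℝ → ℝ)
    (hmeas : Measurable H) (h0 : ∀ x, 0 ≤ H x) (h1 : ∀ x, H x ≤ 1)
    (hint : IntegrableOn H (Set.Ioi 0))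
    (γ : ℝ) (hγ : 0 < γ) (L : ℝ) (hL : Real.exp 1 ≤ L) :
    0 ≤ (1 / L) *
        ∫ x in (0:ℝ)..L,
          (Real.exp (∫ z in (0:ℝ)..L,
              H (torDist L 0 z / (γ * Real.log L)) * H (torDist L x z / (γ * Real.log L))) - 1) ∧
    (1 / L) *
        ∫ x in (0:ℝ)..L,
          (Real.exp (∫ z in (0:ℝ)..L,
              H (torDist L 0 z / (γ * Real.log L)) * H (torDist L x z / (γ * Real.log L))) - 1)
      ≤ (1 / L) * (Real.exp ((2 * γ * ∫ x in Set.Ioi (0:ℝ), H x) * Real.log L) *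
          ((2 * γ * ∫ x in Set.Ioi (0:ℝ), H x) * Real.log L) ^ 2) := by
  have hL0 : (0:ℝ) < L := lt_of_lt_of_le (Real.exp_pos 1) hL
  have hlog : 1 ≤ Real.log L := by
    rw [← Real.log_exp 1]; exact Real.log_le_log (Real.exp_pos 1) hL
  set R : ℝ := γ * Real.log L with hR
  have hRpos : 0 < R := mul_pos hγ (by linarith)
  set K : ℝ := ∫ x in Set.Ioi (0:ℝ), H x with hK
  have hK0 : 0 ≤ K := setIntegral_nonneg measurableSet_Ioi fun x _ => h0 x
  set C : ℝ := 2 * R * K with hC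
  have hC0 : 0 ≤ C := by positivity
  set f : ℝ → ℝ → ℝ := fun x z => H (torDist L 0 z / R) * H (torDist L x z / R) with hf
  set g : ℝ → ℝ := fun x => ∫ z in (0:ℝ)..L, f x z with hg
  have hf0 : ∀ x z, 0 ≤ f x z := fun x z => mul_nonneg (h0 _) (h0 _)
  have hf1 : ∀ x z, f x z ≤ 1 := fun x z =>
    mul_le_one₀ (h1 _) (h0 _) (h1 _)
  have hfabs : ∀ x z, |f x z| ≤ 1 := fun x z => by
    rw [abs_of_nonneg (hf0 x z)]; exact hf1 x z
  have humeas : Measurable fun p : ℝ × ℝ => f p.1 p.2 := by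
    apply Measurable.mul
    · exact hmeas.comp (by unfold torDist; fun_prop)
    · exact hmeas.comp (by unfold torDist; fun_prop)
  have hfmeasx : ∀ x, Measurable fun z => f x z := fun x =>
    humeas.comp (measurable_const.prodMk measurable_id)
  have hfII : ∀ x, IntervalIntegrable (fun z => f x z) volume 0 L := fun x =>
    bddII (hfmeasx x) 1 (hfabs x) 0 L
  -- g basic facts
  have hg0 : ∀ x, 0 ≤ g x := fun x =>
    intervalIntegral.integral_nonneg hL0.le fun z _ => hf0 x z
  have hgL : ∀ x, g x ≤ L := fun x => by
    calc g x ≤ ∫ _ in (0:ℝ)..L, (1:ℝ) :=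
        intervalIntegral.integral_mono_on hL0.le (hfII x) intervalIntegrable_const
          fun z _ => hf1 x z
    _ = L := by simp
  have hHxII : ∀ a : ℝ, IntervalIntegrable (fun z => H (torDist L a z / R)) volume 0 L := by
    intro a
    have hm : Measurable fun z => H (torDist L a z / R) := hmeas.comp (torDist_meas L R a)
    exact bddII hm 1 (fun z => by rw [abs_of_nonneg (h0 _)]; exact h1 _) 0 L
  have hgC : ∀ x ∈ Set.Icc (0:ℝ) L, g x ≤ C := by
    intro x hx
    calc g x ≤ ∫ z in (0:ℝ)..L, H (torDist L x z / R) :=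
        intervalIntegral.integral_mono_on hL0.le (hfII x) (hHxII x)
          fun z _ => mul_le_of_le_one_left (h0 _) (h1 _)
    _ ≤ C := torInt_bound H hmeas h0 h1 hint L R x hL0 hRpos hx.1 hx.2
  -- measurability of g
  set muL : Measure ℝ := volume.restrict (Set.Ioc (0:ℝ) L) with hmuL
  haveI hμfin : IsFiniteMeasure muL :=
    ⟨by rw [hmuL, Measure.restrict_apply_univ]; exact measure_Ioc_lt_top⟩
  have hgset : ∀ x, g x = ∫ z, f x z ∂muL := fun x => by
    show (∫ z in (0:ℝ)..L, f x z) = _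
    rw [intervalIntegral.integral_of_le hL0.le]
  have hgmeas : Measurable g := by
    have : StronglyMeasurable fun x => ∫ z, f x z ∂muL :=
      (humeas.stronglyMeasurable).integral_prod_right'
    have h2 : g = fun x => ∫ z, f x z ∂muL := funext hgset
    rw [h2]; exact this.measurable
  -- Fubini bound on ∫ g
  have hIprod : Integrable (Function.uncurry f) (muL.prod muL) := by
    refine (integrable_const (1:ℝ)).mono' humeas.aestronglyMeasurable
      (Eventually.of_forall fun p => ?_)
    simp only [Function.uncurry, Real.norm_eq_abs]
    exact (hfabs p.1 p.2).trans (by norm_num)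
  have hgint : ∫ x in (0:ℝ)..L, g x ≤ C ^ 2 := by
    have hswap : ∫ x, (∫ z, f x z ∂muL) ∂muL = ∫ z, (∫ x, f x z ∂muL) ∂muL :=
      integral_integral_swap hIprod
    have hinner : ∀ z ∈ Set.Ioc (0:ℝ) L,
        (∫ x, f x z ∂muL) ≤ H (torDist L 0 z / R) * C := by
      intro z hz
      have e1 : (∫ x, f x z ∂muL)
          = H (torDist L 0 z / R) * ∫ x, H (torDist L x z / R) ∂muL := by
        rw [← integral_const_mul]
      rw [e1]
      refine mul_le_mul_of_nonneg_left ?_ (h0 _)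
      have e2 : (∫ x, H (torDist L x z / R) ∂muL)
          = ∫ x in (0:ℝ)..L, H (torDist L z x / R) := by
        rw [intervalIntegral.integral_of_le hL0.le, hmuL]
        congr 1; funext x; rw [torDist_comm]
      rw [e2]
      exact torInt_bound H hmeas h0 h1 hint L R z hL0 hRpos hz.1.le hz.2
    have hmono : ∫ z, (∫ x, f x z ∂muL) ∂muL
        ≤ ∫ z, H (torDist L 0 z / R) * C ∂muL := by
      rw [hmuL]
      refine setIntegral_mono_on ?_ ?_ measurableSet_Ioc fun z hz => ?_
      · rw [← hmuL]; exact hIprod.integral_prod_right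
      · have h3 := (intervalIntegrable_iff_integrableOn_Ioc_of_le hL0.le).mp (hHxII 0)
        exact h3.mul_const C
      · rw [← hmuL]; exact hinner z hz
    have hfinal : ∫ z, H (torDist L 0 z / R) * C ∂muL ≤ C ^ 2 := by
      rw [integral_mul_const]
      have e3 : (∫ z, H (torDist L 0 z / R) ∂muL)
          = ∫ z in (0:ℝ)..L, H (torDist L 0 z / R) := by
        rw [intervalIntegral.integral_of_le hL0.le, hmuL]
      rw [e3, sq]
      exact mul_le_mul_of_nonneg_right
        (torInt_bound H hmeas h0 h1 hint L R 0 hL0 hRpos le_rfl hL0.le) hC0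
    calc ∫ x in (0:ℝ)..L, g x = ∫ x, (∫ z, f x z ∂muL) ∂muL := by
          rw [intervalIntegral.integral_of_le hL0.le, hmuL]
          exact integral_congr_ae (Eventually.of_forall fun x => by rw [← hmuL]; exact hgset x)
    _ ≤ C ^ 2 := by rw [hswap]; exact hmono.trans hfinal
  -- pointwise exponential bound, integrate
  have hexpII : IntervalIntegrable (fun x => Real.exp (g x) - 1) volume 0 L := by
    have hm : Measurable fun x => Real.exp (g x) - 1 :=
      (Real.measurable_exp.comp hgmeas).sub measurable_const
    refine bddII hm (Real.exp L) ?_ 0 L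
    intro x
    have h4 := Real.add_one_le_exp (g x)
    have h5 := Real.exp_le_exp.mpr (hgL x)
    rw [abs_of_nonneg (by linarith [hg0 x])]
    linarith
  have hgII : IntervalIntegrable g volume 0 L := by
    refine bddII hgmeas L ?_ 0 L
    intro x; rw [abs_of_nonneg (hg0 x)]; exact hgL x
  have hstep : ∫ x in (0:ℝ)..L, (Real.exp (g x) - 1) ≤ Real.exp C * ∫ x in (0:ℝ)..L, g x := by
    rw [← intervalIntegral.integral_const_mul]
    refine intervalIntegral.integral_mono_on hL0.le hexpII (hgII.const_mul _) fun x hx => ?_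
    calc Real.exp (g x) - 1 ≤ g x * Real.exp (g x) := exp_sub_one_le' (g x)
    _ ≤ g x * Real.exp C := by
        exact mul_le_mul_of_nonneg_left (Real.exp_le_exp.mpr (hgC x hx)) (hg0 x)
    _ = Real.exp C * g x := mul_comm _ _
  have hnonneg : 0 ≤ ∫ x in (0:ℝ)..L, (Real.exp (g x) - 1) :=
    intervalIntegral.integral_nonneg hL0.le fun x _ => by
      linarith [Real.add_one_le_exp (g x), hg0 x]
  constructor
  · exact mul_nonneg (by positivity) hnonneg
  · have h2 : ∫ x in (0:ℝ)..L, (Real.exp (g x) - 1) ≤ Real.exp C * C ^ 2 := by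
      refine hstep.trans ?_
      exact mul_le_mul_of_nonneg_left hgint (Real.exp_pos C).le
    have hCrw : C = (2 * γ * K) * Real.log L := by rw [hC, hR]; ring
    rw [← hCrw]
    exact mul_le_mul_of_nonneg_left h2 (by positivity)

/-- With `R_L = γ ln L` and `g^L(x) = ∫_0^L H(ρ_L(0,z)/R_L) H(ρ_L(x,z)/R_L) dz`,
if `2γ‖H‖₁ < 1` then `(1/L) ∫_0^L (e^{g^L(x)} − 1) dx → 0` as `L → ∞`. -/
theorem stmt_6 (H : ℝ → ℝ)
    (hmeas : Measurable H) (h0 : ∀ x, 0 ≤ H x) (h1 : ∀ x, H x ≤ 1)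
    (hint : IntegrableOn H (Set.Ioi 0))
    (γ : ℝ) (hγ : 0 < γ) (hcrit : 2 * γ * (∫ x in Set.Ioi (0:ℝ), H x) < 1) :
    Tendsto
      (fun L : ℝ => (1 / L) *
        ∫ x in (0:ℝ)..L,
          (Real.exp (∫ z in (0:ℝ)..L,
              H (torDist L 0 z / (γ * Real.log L)) * H (torDist L x z / (γ * Real.log L))) - 1))
      atTop (nhds 0) := by
  set K : ℝ := ∫ x in Set.Ioi (0:ℝ), H x with hK
  have hK0 : 0 ≤ K := setIntegral_nonneg measurableSet_Ioi fun x _ => h0 x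
  set M : ℝ := 2 * γ * K with hM
  have hM0 : 0 ≤ M := by positivity
  have hM1 : M < 1 := hcrit
  set B : ℝ → ℝ := fun L => (1 / L) * (Real.exp (M * Real.log L) * (M * Real.log L) ^ 2)
    with hB
  have htB : Tendsto B atTop (nhds 0) := by
    have h := (tendsto_rpow_mul_exp_neg_mul_atTop_nhds_zero 2 (1 - M)
      (by linarith)).comp Real.tendsto_log_atTop
    have h2 := h.const_mul (M ^ 2)
    rw [mul_zero] at h2
    refine h2.congr' ?_
    filter_upwards [eventually_ge_atTop (Real.exp 1)] with L hL
    have hL0 : (0:ℝ) < L := lt_of_lt_of_le (Real.exp_pos 1) hL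
    have hexp : Real.exp (-(1 - M) * Real.log L) = Real.exp (M * Real.log L) * L⁻¹ := by
      rw [show -(1 - M) * Real.log L = M * Real.log L + -Real.log L by ring,
        Real.exp_add, Real.exp_neg, Real.exp_log hL0]
    simp only [Function.comp, hB]
    rw [show (2:ℝ) = ((2:ℕ):ℝ) by norm_num, Real.rpow_natCast, hexp]
    field_simp
  refine squeeze_zero' ?_ ?_ htB
  · filter_upwards [eventually_ge_atTop (Real.exp 1)] with L hL
    exact (perL H hmeas h0 h1 hint γ hγ L hL).1
  · filter_upwards [eventually_ge_atTop (Real.exp 1)] with L hL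
    exact (perL H hmeas h0 h1 hint γ hγ L hL).2
end
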